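/- No aligned nontrivial configuration: for any real phases α_{z,x}, if the two single-qubit Bloch vectors of ψ coincide, i.e. x₁ = x₂, y₁ = y₂ and z₁ = z₂, then both Bloch vectors vanish: x₁ = y₁ = z₁ = x₂ = y₂ = z₂ = 0. -/

import Mathlib

open Matrix Complex Finset Kronecker

/-- Pauli X. -/
noncomputable def X2 : Matrix (Fin 2) (Fin 2) ℂ := !![0, 1; 1, 0]

/-- Pauli Y. -/
noncomputable def Y2 : Matrix (Fin 2) (Fin 2) ℂ := !![0, -Complex.I; Complex.I, 0]

/-- Pauli Z. -/
noncomputable def Z2 : Matrix (Fin 2) (Fin 2) ℂ := !![1, 0; 0, -1]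

/-- The inner product ⟨f, g⟩ = Σ conj(f v) g v (antilinear in the first argument). -/
noncomputable def dotc {ι : Type*} [Fintype ι] (f g : ι → ℂ) : ℂ :=
  ∑ v, (starRingEnd ℂ) (f v) * g v

/-- Two-qubit computational basis vector |ab⟩. -/
noncomputable def bv (a b : Fin 2) : Fin 2 × Fin 2 → ℂ := fun p => if p = (a, b) then 1 else 0

/-- Bell state Φ_{0,0} = (|00⟩+|11⟩)/√2. -/
noncomputable def Bell00 : Fin 2 × Fin 2 → ℂ := (Real.sqrt 2 : ℂ)⁻¹ • (bv 0 0 + bv 1 1)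

/-- Bell state Φ_{0,1} = (|00⟩−|11⟩)/√2. -/
noncomputable def Bell01 : Fin 2 × Fin 2 → ℂ := (Real.sqrt 2 : ℂ)⁻¹ • (bv 0 0 - bv 1 1)

/-- Bell state Φ_{1,0} = (|01⟩+|10⟩)/√2. -/
noncomputable def Bell10 : Fin 2 × Fin 2 → ℂ := (Real.sqrt 2 : ℂ)⁻¹ • (bv 0 1 + bv 1 0)

/-- Bell state Φ_{1,1} = (−|01⟩+|10⟩)/√2. -/
noncomputable def Bell11 : Fin 2 × Fin 2 → ℂ := (Real.sqrt 2 : ℂ)⁻¹ • (-(bv 0 1) + bv 1 0)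

/-- The fiducial state ψ = (1/2) Σ_{z,x} e^{iα_{z,x}} Φ_{z,x}. -/
noncomputable def psiF (α : Fin 2 → Fin 2 → ℝ) : Fin 2 × Fin 2 → ℂ :=
  (1 / 2 : ℂ) • (Complex.exp ((α 0 0 : ℝ) * Complex.I) • Bell00 +
    Complex.exp ((α 0 1 : ℝ) * Complex.I) • Bell01 +
    Complex.exp ((α 1 0 : ℝ) * Complex.I) • Bell10 +
    Complex.exp ((α 1 1 : ℝ) * Complex.I) • Bell11)

/-- Bloch component x₁ = ⟨ψ,(X⊗I)ψ⟩. -/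
noncomputable def blochX1 (α : Fin 2 → Fin 2 → ℝ) : ℂ :=
  dotc (psiF α) ((X2 ⊗ₖ (1 : Matrix (Fin 2) (Fin 2) ℂ)) *ᵥ psiF α)

/-- Bloch component y₁ = ⟨ψ,(Y⊗I)ψ⟩. -/
noncomputable def blochY1 (α : Fin 2 → Fin 2 → ℝ) : ℂ :=
  dotc (psiF α) ((Y2 ⊗ₖ (1 : Matrix (Fin 2) (Fin 2) ℂ)) *ᵥ psiF α)

/-- Bloch component z₁ = ⟨ψ,(Z⊗I)ψ⟩. -/
noncomputable def blochZ1 (α : Fin 2 → Fin 2 → ℝ) : ℂ :=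
  dotc (psiF α) ((Z2 ⊗ₖ (1 : Matrix (Fin 2) (Fin 2) ℂ)) *ᵥ psiF α)

/-- Bloch component x₂ = ⟨ψ,(I⊗X)ψ⟩. -/
noncomputable def blochX2 (α : Fin 2 → Fin 2 → ℝ) : ℂ :=
  dotc (psiF α) (((1 : Matrix (Fin 2) (Fin 2) ℂ) ⊗ₖ X2) *ᵥ psiF α)

/-- Bloch component y₂ = ⟨ψ,(I⊗Y)ψ⟩. -/
noncomputable def blochY2 (α : Fin 2 → Fin 2 → ℝ) : ℂ :=
  dotc (psiF α) (((1 : Matrix (Fin 2) (Fin 2) ℂ) ⊗ₖ Y2) *ᵥ psiF α)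

/-- Bloch component z₂ = ⟨ψ,(I⊗Z)ψ⟩. -/
noncomputable def blochZ2 (α : Fin 2 → Fin 2 → ℝ) : ℂ :=
  dotc (psiF α) (((1 : Matrix (Fin 2) (Fin 2) ℂ) ⊗ₖ Z2) *ᵥ psiF α)

/-!
STATEMENT 9: No aligned nontrivial configuration: if the two single-qubit Bloch
vectors coincide, then they both vanish.
-/
noncomputable def s2 : ℂ := (Real.sqrt 2 : ℂ)⁻¹

lemma psiF_apply (α : Fin 2 → Fin 2 → ℝ) (p : Fin 2 × Fin 2) :
    psiF α p = (1/2 : ℂ) * s2 *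
      (if p = (0,0) then Complex.exp (α 0 0 * Complex.I) + Complex.exp (α 0 1 * Complex.I)
       else if p = (0,1) then Complex.exp (α 1 0 * Complex.I) - Complex.exp (α 1 1 * Complex.I)
       else if p = (1,0) then Complex.exp (α 1 0 * Complex.I) + Complex.exp (α 1 1 * Complex.I)
       else Complex.exp (α 0 0 * Complex.I) - Complex.exp (α 0 1 * Complex.I)) := by
  obtain ⟨a, b⟩ := p
  fin_cases a <;> fin_cases b <;>
    simp [psiF, Bell00, Bell01, Bell10, Bell11, bv, s2, Prod.ext_iff] <;> ring
lemma s2_mul_s2 : s2 * s2 = 1/2 := by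
  have h : (Real.sqrt 2 : ℝ) * Real.sqrt 2 = 2 := Real.mul_self_sqrt (by norm_num)
  simp only [s2, ← mul_inv]
  rw [← Complex.ofReal_mul, h]
  norm_num

lemma conj_s2 : (starRingEnd ℂ) s2 = s2 := by simp [s2]

lemma s2_pair (A B : ℂ) :
    ((starRingEnd ℂ) 2)⁻¹ * s2 * A * (1/2 * s2 * B) = A * B / 8 := by
  have h2 : ((starRingEnd ℂ) 2 : ℂ) = 2 := by simpa using Complex.conj_ofReal 2
  calc ((starRingEnd ℂ) 2)⁻¹ * s2 * A * (1/2 * s2 * B)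
      = (s2 * s2) * (A * B) * (((starRingEnd ℂ) 2)⁻¹ * (1/2)) := by ring
    _ = A * B / 8 := by rw [s2_mul_s2, h2]; ring

lemma s2_pairI (A B : ℂ) :
    ((starRingEnd ℂ) 2)⁻¹ * s2 * A * (Complex.I * (1/2 * s2 * B)) = Complex.I * (A * B) / 8 := by
  have h2 : ((starRingEnd ℂ) 2 : ℂ) = 2 := by simpa using Complex.conj_ofReal 2
  calc ((starRingEnd ℂ) 2)⁻¹ * s2 * A * (Complex.I * (1/2 * s2 * B))
      = (s2 * s2) * (Complex.I * (A * B)) * (((starRingEnd ℂ) 2)⁻¹ * (1/2)) := by ring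
    _ = Complex.I * (A * B) / 8 := by rw [s2_mul_s2, h2]; ring
lemma blochX1_eq (α : Fin 2 → Fin 2 → ℝ) :
    blochX1 α = (((Real.cos (α 0 0 - α 1 0) + Real.cos (α 0 1 - α 1 1)) / 2 : ℝ) : ℂ) := by
  simp only [blochX1, dotc, Fintype.sum_prod_type, Fin.sum_univ_two, Matrix.mulVec,
    dotProduct, Matrix.kroneckerMap_apply, X2, Y2, Z2, Matrix.one_apply, psiF_apply,
    Matrix.cons_val', Matrix.cons_val_zero, Matrix.cons_val_one, Matrix.head_cons,
    Matrix.empty_val', Matrix.cons_val_fin_one, Matrix.head_fin_const]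
  norm_num [_root_.map_mul, conj_s2, Prod.ext_iff, ← Complex.exp_conj, Complex.conj_ofReal,
    Complex.conj_I, Complex.ofReal_cos, Complex.ofReal_sin, Complex.cos, Complex.sin,
    Complex.ofReal_sub]
  simp only [s2_pair, s2_pairI, sub_mul, neg_mul, Complex.exp_neg, Complex.exp_sub]
  field_simp [Complex.exp_ne_zero]
  ring

lemma blochX2_eq (α : Fin 2 → Fin 2 → ℝ) :
    blochX2 α = (((Real.cos (α 0 0 - α 1 0) - Real.cos (α 0 1 - α 1 1)) / 2 : ℝ) : ℂ) := by
  simp only [blochX2, dotc, Fintype.sum_prod_type, Fin.sum_univ_two, Matrix.mulVec,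
    dotProduct, Matrix.kroneckerMap_apply, X2, Y2, Z2, Matrix.one_apply, psiF_apply,
    Matrix.cons_val', Matrix.cons_val_zero, Matrix.cons_val_one, Matrix.head_cons,
    Matrix.empty_val', Matrix.cons_val_fin_one, Matrix.head_fin_const]
  norm_num [_root_.map_mul, conj_s2, Prod.ext_iff, ← Complex.exp_conj, Complex.conj_ofReal,
    Complex.conj_I, Complex.ofReal_cos, Complex.ofReal_sin, Complex.cos, Complex.sin,
    Complex.ofReal_sub]
  simp only [s2_pair, s2_pairI, sub_mul, neg_mul, Complex.exp_neg, Complex.exp_sub]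
  field_simp [Complex.exp_ne_zero]
  ring

lemma blochY1_eq (α : Fin 2 → Fin 2 → ℝ) :
    blochY1 α = (((Real.sin (α 1 1 - α 0 0) + Real.sin (α 1 0 - α 0 1)) / 2 : ℝ) : ℂ) := by
  simp only [blochY1, dotc, Fintype.sum_prod_type, Fin.sum_univ_two, Matrix.mulVec,
    dotProduct, Matrix.kroneckerMap_apply, X2, Y2, Z2, Matrix.one_apply, psiF_apply,
    Matrix.cons_val', Matrix.cons_val_zero, Matrix.cons_val_one, Matrix.head_cons,
    Matrix.empty_val', Matrix.cons_val_fin_one, Matrix.head_fin_const]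
  norm_num [_root_.map_mul, conj_s2, Prod.ext_iff, ← Complex.exp_conj, Complex.conj_ofReal,
    Complex.conj_I, Complex.ofReal_cos, Complex.ofReal_sin, Complex.cos, Complex.sin,
    Complex.ofReal_sub]
  simp only [s2_pair, s2_pairI, sub_mul, neg_mul, Complex.exp_neg, Complex.exp_sub]
  field_simp [Complex.exp_ne_zero]
  ring

lemma blochY2_eq (α : Fin 2 → Fin 2 → ℝ) :
    blochY2 α = (((Real.sin (α 1 0 - α 0 1) - Real.sin (α 1 1 - α 0 0)) / 2 : ℝ) : ℂ) := by
  simp only [blochY2, dotc, Fintype.sum_prod_type, Fin.sum_univ_two, Matrix.mulVec,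
    dotProduct, Matrix.kroneckerMap_apply, X2, Y2, Z2, Matrix.one_apply, psiF_apply,
    Matrix.cons_val', Matrix.cons_val_zero, Matrix.cons_val_one, Matrix.head_cons,
    Matrix.empty_val', Matrix.cons_val_fin_one, Matrix.head_fin_const]
  norm_num [_root_.map_mul, conj_s2, Prod.ext_iff, ← Complex.exp_conj, Complex.conj_ofReal,
    Complex.conj_I, Complex.ofReal_cos, Complex.ofReal_sin, Complex.cos, Complex.sin,
    Complex.ofReal_sub]
  simp only [s2_pair, s2_pairI, sub_mul, neg_mul, Complex.exp_neg, Complex.exp_sub]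
  field_simp [Complex.exp_ne_zero]
  ring

lemma blochZ1_eq (α : Fin 2 → Fin 2 → ℝ) :
    blochZ1 α = (((Real.cos (α 0 0 - α 0 1) - Real.cos (α 1 0 - α 1 1)) / 2 : ℝ) : ℂ) := by
  simp only [blochZ1, dotc, Fintype.sum_prod_type, Fin.sum_univ_two, Matrix.mulVec,
    dotProduct, Matrix.kroneckerMap_apply, X2, Y2, Z2, Matrix.one_apply, psiF_apply,
    Matrix.cons_val', Matrix.cons_val_zero, Matrix.cons_val_one, Matrix.head_cons,
    Matrix.empty_val', Matrix.cons_val_fin_one, Matrix.head_fin_const]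
  norm_num [_root_.map_mul, conj_s2, Prod.ext_iff, ← Complex.exp_conj, Complex.conj_ofReal,
    Complex.conj_I, Complex.ofReal_cos, Complex.ofReal_sin, Complex.cos, Complex.sin,
    Complex.ofReal_sub]
  simp only [s2_pair, s2_pairI, sub_mul, neg_mul, Complex.exp_neg, Complex.exp_sub]
  field_simp [Complex.exp_ne_zero]
  ring

lemma blochZ2_eq (α : Fin 2 → Fin 2 → ℝ) :
    blochZ2 α = (((Real.cos (α 0 0 - α 0 1) + Real.cos (α 1 0 - α 1 1)) / 2 : ℝ) : ℂ) := by
  simp only [blochZ2, dotc, Fintype.sum_prod_type, Fin.sum_univ_two, Matrix.mulVec,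
    dotProduct, Matrix.kroneckerMap_apply, X2, Y2, Z2, Matrix.one_apply, psiF_apply,
    Matrix.cons_val', Matrix.cons_val_zero, Matrix.cons_val_one, Matrix.head_cons,
    Matrix.empty_val', Matrix.cons_val_fin_one, Matrix.head_fin_const]
  norm_num [_root_.map_mul, conj_s2, Prod.ext_iff, ← Complex.exp_conj, Complex.conj_ofReal,
    Complex.conj_I, Complex.ofReal_cos, Complex.ofReal_sin, Complex.cos, Complex.sin,
    Complex.ofReal_sub]
  simp only [s2_pair, s2_pairI, sub_mul, neg_mul, Complex.exp_neg, Complex.exp_sub]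
  field_simp [Complex.exp_ne_zero]
  ring

theorem stmt9 (α : Fin 2 → Fin 2 → ℝ)
    (hx : blochX1 α = blochX2 α) (hy : blochY1 α = blochY2 α)
    (hz : blochZ1 α = blochZ2 α) :
    blochX1 α = 0 ∧ blochY1 α = 0 ∧ blochZ1 α = 0 ∧
    blochX2 α = 0 ∧ blochY2 α = 0 ∧ blochZ2 α = 0 := by
  simp only [blochX1_eq, blochX2_eq, blochY1_eq, blochY2_eq, blochZ1_eq, blochZ2_eq,
    Complex.ofReal_inj, Complex.ofReal_eq_zero] at hx hy hz ⊢
  have e1 : Real.cos (α 0 1 - α 1 1) = 0 := by linarith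
  have e2 : Real.sin (α 1 1 - α 0 0) = 0 := by linarith
  have e3 : Real.cos (α 1 0 - α 1 1) = 0 := by linarith
  have g1 : Real.cos (α 0 0 - α 1 0) = 0 := by
    have h : α 0 0 - α 1 0 = -((α 1 0 - α 1 1) + (α 1 1 - α 0 0)) := by ring
    rw [h, Real.cos_neg, Real.cos_add, e3, e2]; ring
  have g2 : Real.cos (α 0 0 - α 0 1) = 0 := by
    have h : α 0 0 - α 0 1 = -((α 0 1 - α 1 1) + (α 1 1 - α 0 0)) := by ring
    rw [h, Real.cos_neg, Real.cos_add, e1, e2]; ring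
  have g3 : Real.sin (α 1 0 - α 0 1) = 0 := by
    have h : α 1 0 - α 0 1 = (α 1 0 - α 1 1) - (α 0 1 - α 1 1) := by ring
    rw [h, Real.sin_sub, e1, e3]; ring
  refine ⟨?_, ?_, ?_, ?_, ?_, ?_⟩ <;> linarith
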